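/- For every real ε with 0 < ε < 1/(2n), integer j ≥ 1 and integer n ≥ 3, defining α_k = 1 + ε^{j+k}, one has γ_k < α_1 for all 2 ≤ k ≤ n−1, where γ_k = α_0 · (α_1 − α_{k−1} + α_{n−1})/(α_0 − α_{k−1} + α_{n−1}). -/

import Mathlib

/-- With `α k = 1 + ε^(j+k)`, for all `2 ≤ k ≤ n−1` one has
`γ_k = α₀(α₁ − α_{k−1} + α_{n−1})/(α₀ − α_{k−1} + α_{n−1}) < α₁`:
the inflow rate into link `e₁` stays below its capacity, so its queue shrinks. -/
theorem stmt2 (n j : ℕ) (hn : 3 ≤ n) (hj : 1 ≤ j)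
    (ε : ℝ) (hε0 : 0 < ε) (hε : ε < 1 / (2 * n))
    (α : ℕ → ℝ) (hα : ∀ k, α k = 1 + ε ^ (j + k)) :
    ∀ k, 2 ≤ k → k ≤ n - 1 →
      α 0 * (α 1 - α (k - 1) + α (n - 1)) / (α 0 - α (k - 1) + α (n - 1)) < α 1 := by
  intro k hk2 hkn
  have hn6 : (6 : ℝ) ≤ 2 * n := by
    have : (3 : ℝ) ≤ n := by exact_mod_cast hn
    linarith
  have hε1 : ε < 1 := by
    have h : (1 : ℝ) / (2 * n) ≤ 1 / 6 := by
      apply one_div_le_one_div_of_le <;> linarith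
    linarith
  have h1 : ε ^ (j + 1) < ε ^ j := by
    simpa using pow_lt_pow_right_of_lt_one₀ hε0 hε1 (show j < j + 1 by omega)
  have h2 : ε ^ (j + (n - 1)) < ε ^ (j + (k - 1)) :=
    pow_lt_pow_right_of_lt_one₀ hε0 hε1 (by omega)
  have h3 : ε ^ (j + (k - 1)) < ε ^ j := by
    simpa using pow_lt_pow_right_of_lt_one₀ hε0 hε1 (show j < j + (k - 1) by omega)
  have hpos : 0 < ε ^ (j + (n - 1)) := pow_pos hε0 _
  have hD : 0 < α 0 - α (k - 1) + α (n - 1) := by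
    rw [hα, hα, hα]
    simp only [Nat.add_zero]
    nlinarith
  rw [div_lt_iff₀ hD]
  simp only [hα, Nat.add_zero]
  nlinarith [mul_pos (sub_pos.2 h1) (sub_pos.2 h2)]
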